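/- For any complex numbers a_m supported on N < m ≤ 2N, one has Σ_{m ≤ 2N} Σ_{n ≤ 2N} gcd(m,n) |a_m| |a_n| ≪_ε N^{1+ε} Σ_n |a_n|² for every ε > 0. -/

import Mathlib

open Finset Real

-- exp x ≥ x²/4 for x ≥ 0
lemma exp_ge_sq_div_four {x : ℝ} (hx : 0 ≤ x) : x ^ 2 / 4 ≤ Real.exp x := by
  have h1 : (1 + x / 2) ^ 2 ≤ Real.exp x := by
    have := Real.add_one_le_exp (x / 2)
    calc (1 + x / 2) ^ 2 ≤ (Real.exp (x / 2)) ^ 2 := by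
          apply pow_le_pow_left₀ (by linarith) (by linarith [this])
      _ = Real.exp x := by rw [← Real.exp_nat_mul]; ring_nf
  nlinarith [sq_nonneg (x/2)]

-- (k+1) ≤ M * 2^(kε) with M = max 1 (8/(ε log 2)²)
lemma key1 (ε : ℝ) (hε : 0 < ε) (k : ℕ) :
    (k + 1 : ℝ) ≤ max 1 (8 / (ε * Real.log 2) ^ 2) * (2 : ℝ) ^ ((k : ℝ) * ε) := by
  set M := max 1 (8 / (ε * Real.log 2) ^ 2) with hM
  have hl2 : 0 < Real.log 2 := Real.log_pos (by norm_num)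
  have hM1 : (1:ℝ) ≤ M := le_max_left _ _
  rcases Nat.eq_zero_or_pos k with rfl | hk
  · simpa using hM1
  · have h2 : (2:ℝ) ^ ((k:ℝ) * ε) = Real.exp ((k:ℝ) * ε * Real.log 2) := by
      rw [Real.rpow_def_of_pos (by norm_num)]; ring_nf
    have hx : 0 ≤ (k:ℝ) * ε * Real.log 2 := by positivity
    have h3 : ((k:ℝ) * ε * Real.log 2) ^ 2 / 4 ≤ (2:ℝ) ^ ((k:ℝ) * ε) := by
      rw [h2]; exact exp_ge_sq_div_four hx
    have hk1 : (1:ℝ) ≤ (k:ℝ) := by exact_mod_cast hk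
    have hM2 : 8 / (ε * Real.log 2) ^ 2 ≤ M := le_max_right _ _
    have hpos : 0 < (ε * Real.log 2) ^ 2 := by positivity
    -- (k+1) ≤ 2k ≤ M * k² (εlog2)²/4 ≤ M * 2^(kε)
    have : (k + 1 : ℝ) ≤ (8 / (ε * Real.log 2) ^ 2) * (((k:ℝ) * ε * Real.log 2) ^ 2 / 4) := by
      have h4 : (8 / (ε * Real.log 2) ^ 2) * (((k:ℝ) * ε * Real.log 2) ^ 2 / 4)
          = 2 * (k:ℝ)^2 := by
        field_simp
        ring
      rw [h4]
      nlinarith [sq_nonneg ((k:ℝ) - 1)]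
    calc (k + 1 : ℝ) ≤ (8 / (ε * Real.log 2) ^ 2) * (((k:ℝ) * ε * Real.log 2) ^ 2 / 4) := this
      _ ≤ M * (2:ℝ) ^ ((k:ℝ) * ε) := by
          apply mul_le_mul hM2 h3 (by positivity) (by linarith)

lemma tau_bound (ε : ℝ) (hε : 0 < ε) :
    ∃ C : ℝ, 1 ≤ C ∧ ∀ n : ℕ, 0 < n → (n.divisors.card : ℝ) ≤ C * (n : ℝ) ^ ε := by
  set M := max 1 (8 / (ε * Real.log 2) ^ 2) with hMdef
  have hM1 : (1:ℝ) ≤ M := le_max_left _ _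
  set B := (2 : ℝ) ^ ε⁻¹ with hB
  set b := ⌊B⌋₊ with hb
  refine ⟨M ^ (b + 1), one_le_pow₀ hM1, ?_⟩
  intro n hn
  have hn0 : n ≠ 0 := hn.ne'
  rw [Nat.card_divisors hn0]
  set S := n.primeFactors with hS
  set c : ℕ → ℝ := fun p => if (p : ℝ) < B then M else 1 with hc
  have step1 : ((S.prod (n.factorization · + 1) : ℕ) : ℝ)
      ≤ ∏ p ∈ S, (c p * (p : ℝ) ^ ((n.factorization p : ℝ) * ε)) := by
    push_cast
    apply Finset.prod_le_prod
    · intro p _; positivity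
    · intro p hp
      have hp2 : (2 : ℝ) ≤ (p : ℝ) := by
        exact_mod_cast (Nat.prime_of_mem_primeFactors hp).two_le
      set k := n.factorization p with hk
      by_cases hpB : (p : ℝ) < B
      · have h1 := key1 ε hε k
        have h2 : (2:ℝ) ^ ((k:ℝ) * ε) ≤ (p:ℝ) ^ ((k:ℝ) * ε) :=
          Real.rpow_le_rpow (by norm_num) hp2 (by positivity)
        simp only [hc, if_pos hpB]
        calc ((k:ℝ) + 1) ≤ M * (2:ℝ) ^ ((k:ℝ) * ε) := h1
          _ ≤ M * (p:ℝ) ^ ((k:ℝ) * ε) := by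
              apply mul_le_mul_of_nonneg_left h2 (by linarith)
      · have hBp : B ≤ (p : ℝ) := le_of_not_gt hpB
        have hpe : (2:ℝ) ≤ (p:ℝ) ^ ε := by
          have : B ^ ε ≤ (p:ℝ) ^ ε :=
            Real.rpow_le_rpow (by positivity) hBp hε.le
          rwa [hB, ← Real.rpow_mul (by norm_num), inv_mul_cancel₀ hε.ne',
            Real.rpow_one] at this
        have heq : (p:ℝ) ^ ((k:ℝ) * ε) = ((p:ℝ) ^ ε) ^ (k : ℕ) := by
          rw [mul_comm, Real.rpow_mul (by positivity), Real.rpow_natCast]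
        have h2k : ((k:ℝ) + 1) ≤ (2:ℝ) ^ (k : ℕ) := by
          exact_mod_cast (Nat.lt_two_pow_self (n := k))
        simp only [hc, if_neg hpB, one_mul]
        rw [heq]
        calc ((k:ℝ) + 1) ≤ (2:ℝ) ^ (k:ℕ) := h2k
          _ ≤ ((p:ℝ) ^ ε) ^ (k:ℕ) := pow_le_pow_left₀ (by norm_num) hpe k
  have step2 : ∏ p ∈ S, (p : ℝ) ^ ((n.factorization p : ℝ) * ε) = (n : ℝ) ^ ε := by
    have h1 : ∀ p ∈ S, (p : ℝ) ^ ((n.factorization p : ℝ) * ε)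
        = ((p : ℝ) ^ (n.factorization p : ℕ)) ^ ε := by
      intro p hp
      rw [← Real.rpow_natCast (p:ℝ) (n.factorization p), ← Real.rpow_mul (by positivity)]
    rw [Finset.prod_congr rfl h1, Real.finset_prod_rpow _ _ (fun p _ => by positivity)]
    congr 1
    exact_mod_cast Nat.factorization_prod_pow_eq_self hn0
  have step3 : ∏ p ∈ S, c p ≤ M ^ (b + 1) := by
    rw [← Finset.prod_filter_mul_prod_filter_not S (fun p : ℕ => (p:ℝ) < B) c]
    have e1 : ∏ p ∈ S.filter (fun p : ℕ => (p:ℝ) < B), c p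
        = M ^ (S.filter (fun p : ℕ => (p:ℝ) < B)).card := by
      rw [Finset.prod_congr rfl (fun p hp => ?_), Finset.prod_const]
      exact if_pos (Finset.mem_filter.mp hp).2
    have e2 : ∏ p ∈ S.filter (fun p : ℕ => ¬ (p:ℝ) < B), c p = 1 := by
      rw [Finset.prod_congr rfl (fun p hp => ?_), Finset.prod_const_one]
      exact if_neg (Finset.mem_filter.mp hp).2
    rw [e1, e2, mul_one]
    apply pow_le_pow_right₀ hM1
    have hsub : S.filter (fun p : ℕ => (p:ℝ) < B) ⊆ Finset.range (b + 1) := by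
      intro p hp
      rw [Finset.mem_range, Nat.lt_succ_iff]
      exact Nat.le_floor (Finset.mem_filter.mp hp).2.le
    calc (S.filter (fun p : ℕ => (p:ℝ) < B)).card ≤ (Finset.range (b+1)).card :=
        Finset.card_le_card hsub
      _ = b + 1 := Finset.card_range _
  calc ((S.prod (n.factorization · + 1) : ℕ) : ℝ)
      ≤ ∏ p ∈ S, (c p * (p : ℝ) ^ ((n.factorization p : ℝ) * ε)) := step1
    _ = (∏ p ∈ S, c p) * ∏ p ∈ S, (p : ℝ) ^ ((n.factorization p : ℝ) * ε) :=
        Finset.prod_mul_distrib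
    _ ≤ M ^ (b + 1) * (n : ℝ) ^ ε := by
        rw [step2]
        apply mul_le_mul_of_nonneg_right step3 (by positivity)

lemma Gbound (m N : ℕ) (hm : m ≠ 0) :
    ∑ n ∈ Finset.Icc 1 (2 * N), Nat.gcd m n ≤ m.divisors.card * (2 * N) := by
  have hIcc : Finset.Icc 1 (2 * N) = Finset.Ioc 0 (2 * N) := Finset.Icc_add_one_left_eq_Ioc 0 (2 * N)
  rw [hIcc]
  have hmap : ∀ n ∈ Finset.Ioc 0 (2 * N), Nat.gcd m n ∈ m.divisors :=
    fun n _ => Nat.mem_divisors.mpr ⟨Nat.gcd_dvd_left m n, hm⟩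
  calc ∑ n ∈ Finset.Ioc 0 (2 * N), Nat.gcd m n
      = ∑ d ∈ m.divisors, ∑ n ∈ (Finset.Ioc 0 (2 * N)).filter (fun n => Nat.gcd m n = d),
          Nat.gcd m n := (Finset.sum_fiberwise_of_maps_to hmap _).symm
    _ ≤ ∑ d ∈ m.divisors, 2 * N := by
        apply Finset.sum_le_sum
        intro d hd
        have hsub : (Finset.Ioc 0 (2 * N)).filter (fun n => Nat.gcd m n = d)
            ⊆ (Finset.Ioc 0 (2 * N)).filter (fun n => d ∣ n) := by
          intro n hn
          rw [Finset.mem_filter] at hn ⊢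
          exact ⟨hn.1, hn.2 ▸ Nat.gcd_dvd_right m n⟩
        have hcard : ((Finset.Ioc 0 (2 * N)).filter (fun n => Nat.gcd m n = d)).card
            ≤ 2 * N / d := by
          calc _ ≤ ((Finset.Ioc 0 (2 * N)).filter (fun n => d ∣ n)).card :=
              Finset.card_le_card hsub
            _ = 2 * N / d := Nat.Ioc_filter_dvd_card_eq_div (2 * N) d
        calc ∑ n ∈ (Finset.Ioc 0 (2 * N)).filter (fun n => Nat.gcd m n = d), Nat.gcd m n
            = ∑ n ∈ (Finset.Ioc 0 (2 * N)).filter (fun n => Nat.gcd m n = d), d :=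
              Finset.sum_congr rfl fun n hn => (Finset.mem_filter.mp hn).2
          _ = ((Finset.Ioc 0 (2 * N)).filter (fun n => Nat.gcd m n = d)).card * d := by
              rw [Finset.sum_const, smul_eq_mul]
          _ ≤ (2 * N / d) * d := Nat.mul_le_mul_right d hcard
          _ ≤ 2 * N := Nat.div_mul_le_self _ _
    _ = m.divisors.card * (2 * N) := by rw [Finset.sum_const, smul_eq_mul]

/-- For coefficients supported on `N < m ≤ 2N`,
`∑_{m,n ≤ 2N} gcd(m,n)|a_m||a_n| ≪_ε N^{1+ε} ∑ |a_n|²`. -/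
theorem gcd_bilinear_bound :
    ∀ ε : ℝ, 0 < ε → ∃ C : ℝ, 0 < C ∧ ∀ (N : ℕ) (a : ℕ → ℂ),
      (∀ m : ℕ, m ≤ N ∨ 2 * N < m → a m = 0) →
      ∑ m ∈ Finset.Icc 1 (2 * N), ∑ n ∈ Finset.Icc 1 (2 * N),
          (Nat.gcd m n : ℝ) * ‖a m‖ * ‖a n‖
        ≤ C * (N : ℝ) ^ ((1 : ℝ) + ε) * ∑ n ∈ Finset.Icc 1 (2 * N), ‖a n‖ ^ 2 := by
  intro ε hε
  obtain ⟨C₀, hC₀, htau⟩ := tau_bound ε hε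
  set C : ℝ := C₀ * (2 : ℝ) ^ ((1 : ℝ) + ε) with hC
  have hCpos : 0 < C := by positivity
  refine ⟨C, hCpos, ?_⟩
  intro N a ha
  set T := Finset.Icc 1 (2 * N) with hT
  -- AM-GM step
  have amgm : ∑ m ∈ T, ∑ n ∈ T, (Nat.gcd m n : ℝ) * ‖a m‖ * ‖a n‖
      ≤ ∑ m ∈ T, ‖a m‖ ^ 2 * ∑ n ∈ T, (Nat.gcd m n : ℝ) := by
    have h1 : ∑ m ∈ T, ∑ n ∈ T, (Nat.gcd m n : ℝ) * ‖a m‖ * ‖a n‖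
        ≤ ∑ m ∈ T, ∑ n ∈ T,
            ((Nat.gcd m n : ℝ) * ‖a m‖ ^ 2 / 2 + (Nat.gcd m n : ℝ) * ‖a n‖ ^ 2 / 2) := by
      apply Finset.sum_le_sum; intro m _
      apply Finset.sum_le_sum; intro n _
      have hg : (0:ℝ) ≤ (Nat.gcd m n : ℝ) := Nat.cast_nonneg _
      nlinarith [mul_nonneg hg (sq_nonneg (‖a m‖ - ‖a n‖))]
    have h2 : ∑ m ∈ T, ∑ n ∈ T,
          ((Nat.gcd m n : ℝ) * ‖a m‖ ^ 2 / 2 + (Nat.gcd m n : ℝ) * ‖a n‖ ^ 2 / 2)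
        = ∑ m ∈ T, ‖a m‖ ^ 2 * ∑ n ∈ T, (Nat.gcd m n : ℝ) := by
      have hsplit : ∀ m, ∑ n ∈ T,
            ((Nat.gcd m n : ℝ) * ‖a m‖ ^ 2 / 2 + (Nat.gcd m n : ℝ) * ‖a n‖ ^ 2 / 2)
          = (∑ n ∈ T, (Nat.gcd m n : ℝ) * ‖a m‖ ^ 2 / 2)
            + ∑ n ∈ T, (Nat.gcd m n : ℝ) * ‖a n‖ ^ 2 / 2 := fun m => Finset.sum_add_distrib
      simp only [hsplit, Finset.sum_add_distrib]
      have hswap : (∑ m ∈ T, ∑ n ∈ T, (Nat.gcd m n : ℝ) * ‖a n‖ ^ 2 / 2)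
          = ∑ m ∈ T, ∑ n ∈ T, (Nat.gcd m n : ℝ) * ‖a m‖ ^ 2 / 2 := by
        rw [Finset.sum_comm]
        exact Finset.sum_congr rfl fun m _ => Finset.sum_congr rfl fun n _ => by
          rw [Nat.gcd_comm]
      rw [hswap, ← Finset.sum_add_distrib]
      apply Finset.sum_congr rfl
      intro m _
      rw [Finset.mul_sum, ← Finset.sum_add_distrib]
      exact Finset.sum_congr rfl fun n _ => by ring
    exact h1.trans_eq h2
  -- pointwise bound for each m
  have key : ∀ m ∈ T, ‖a m‖ ^ 2 * ∑ n ∈ T, (Nat.gcd m n : ℝ)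
      ≤ (C * (N : ℝ) ^ ((1:ℝ) + ε)) * ‖a m‖ ^ 2 := by
    intro m hm
    by_cases h0 : a m = 0
    · simp [h0]
    · have hmN : N < m ∧ m ≤ 2 * N := by
        by_contra hcon
        rcases not_and_or.mp hcon with h | h
        · exact h0 (ha m (Or.inl (le_of_not_gt h)))
        · exact h0 (ha m (Or.inr (lt_of_not_ge h)))
      have hm0 : m ≠ 0 := by omega
      have hN1 : 1 ≤ N := by omega
      have hmpos : 0 < m := Nat.pos_of_ne_zero hm0
      have hG : (∑ n ∈ T, (Nat.gcd m n : ℝ)) ≤ (m.divisors.card : ℝ) * (2 * N) := by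
        rw [hT, ← Nat.cast_sum]
        exact_mod_cast Gbound m N hm0
      have htm : (m.divisors.card : ℝ) ≤ C₀ * ((2 * N : ℕ) : ℝ) ^ ε := by
        calc (m.divisors.card : ℝ) ≤ C₀ * (m : ℝ) ^ ε := htau m hmpos
          _ ≤ C₀ * ((2 * N : ℕ) : ℝ) ^ ε := by
              apply mul_le_mul_of_nonneg_left _ (by linarith)
              apply Real.rpow_le_rpow (by positivity) _ hε.le
              exact_mod_cast hmN.2
      have h2N : ((2 * N : ℕ) : ℝ) = 2 * (N : ℝ) := by push_cast; ring
      have hGfinal : (∑ n ∈ T, (Nat.gcd m n : ℝ)) ≤ C * (N : ℝ) ^ ((1:ℝ) + ε) := by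
        have hNpos : (0:ℝ) < (N : ℝ) := by exact_mod_cast hN1
        calc (∑ n ∈ T, (Nat.gcd m n : ℝ)) ≤ (m.divisors.card : ℝ) * (2 * N) := hG
          _ ≤ (C₀ * ((2 * N : ℕ) : ℝ) ^ ε) * (2 * N) := by
              apply mul_le_mul_of_nonneg_right htm (by positivity)
          _ = C₀ * ((2 * (N:ℝ)) ^ ε * (2 * (N:ℝ)) ^ (1:ℝ)) := by
              rw [h2N, Real.rpow_one]; ring
          _ = C₀ * (2 * (N:ℝ)) ^ ((1:ℝ) + ε) := by
              rw [← Real.rpow_add (by positivity), add_comm]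
          _ = C * (N : ℝ) ^ ((1:ℝ) + ε) := by
              rw [hC, Real.mul_rpow (by norm_num) hNpos.le]; ring
      calc ‖a m‖ ^ 2 * ∑ n ∈ T, (Nat.gcd m n : ℝ)
          ≤ ‖a m‖ ^ 2 * (C * (N : ℝ) ^ ((1:ℝ) + ε)) :=
            mul_le_mul_of_nonneg_left hGfinal (sq_nonneg _)
        _ = (C * (N : ℝ) ^ ((1:ℝ) + ε)) * ‖a m‖ ^ 2 := by ring
  calc ∑ m ∈ T, ∑ n ∈ T, (Nat.gcd m n : ℝ) * ‖a m‖ * ‖a n‖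
      ≤ ∑ m ∈ T, ‖a m‖ ^ 2 * ∑ n ∈ T, (Nat.gcd m n : ℝ) := amgm
    _ ≤ ∑ m ∈ T, (C * (N : ℝ) ^ ((1:ℝ) + ε)) * ‖a m‖ ^ 2 := Finset.sum_le_sum key
    _ = C * (N : ℝ) ^ ((1:ℝ) + ε) * ∑ n ∈ T, ‖a n‖ ^ 2 := by
        rw [← Finset.mul_sum]
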